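/- Let E be a finite-dimensional real normed vector space, X1, X2, X0 : E → E C^∞ vector fields, δ, h : E → ℝ C^∞ functions with (X1δ)² + (X2δ)² = 1 everywhere, and set f = e^h·δ and m = √((X1f)² + (X2f)²). Then at every point p with δ(p) = 0: X0(X0δ)(p) = X0(X0f)(p)/m(p) − 2·X0(h)(p)·X0(f)(p)/m(p). (Hence the second derivative X0X0δ along the surface can be recovered from f only if the density h relating f = e^h·δ is known.) -/

import Mathlib

/-- Remark 6.2 of the paper: if `δ` satisfies the eikonal equation
`(X1δ)² + (X2δ)² = 1`, `f = e^h·δ` and `m = √((X1f)² + (X2f)²)`, then on the zero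
level set of `δ` one has `X0X0δ = X0X0f/m − 2·X0h·X0f/m`. -/
theorem second_reeb_derivative_from_defining_function
    {E : Type*} [NormedAddCommGroup E] [NormedSpace ℝ E] [FiniteDimensional ℝ E]
    (X1 X2 X0 : E → E) (δ h : E → ℝ)
    (hX1 : ContDiff ℝ (⊤ : ℕ∞) X1) (hX2 : ContDiff ℝ (⊤ : ℕ∞) X2)
    (hX0 : ContDiff ℝ (⊤ : ℕ∞) X0)
    (hδ : ContDiff ℝ (⊤ : ℕ∞) δ) (hh : ContDiff ℝ (⊤ : ℕ∞) h)
    (heik : ∀ q, (fderiv ℝ δ q (X1 q)) ^ 2 + (fderiv ℝ δ q (X2 q)) ^ 2 = 1)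
    (f : E → ℝ) (hf : f = fun q => Real.exp (h q) * δ q)
    (m : E → ℝ)
    (hm : m = fun q => Real.sqrt ((fderiv ℝ f q (X1 q)) ^ 2 + (fderiv ℝ f q (X2 q)) ^ 2))
    (p : E) (hp : δ p = 0) :
    fderiv ℝ (fun q => fderiv ℝ δ q (X0 q)) p (X0 p)
      = fderiv ℝ (fun q => fderiv ℝ f q (X0 q)) p (X0 p) / m p
        - 2 * (fderiv ℝ h p (X0 p)) * (fderiv ℝ f p (X0 p)) / m p := by
  have hδd : Differentiable ℝ δ := hδ.differentiable (by simp)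
  have hhd : Differentiable ℝ h := hh.differentiable (by simp)
  have hed : Differentiable ℝ (fun q => Real.exp (h q)) := hhd.exp
  -- derivative of f
  have hDf : ∀ q (w : E), fderiv ℝ f q w
      = Real.exp (h q) * (δ q * fderiv ℝ h q w + fderiv ℝ δ q w) := by
    intro q w
    rw [hf, fderiv_fun_mul (hed q) (hδd q)]
    simp [fderiv_exp (hhd q)]
    ring
  -- m p = exp (h p)
  have hmp : m p = Real.exp (h p) := by
    rw [hm]
    have h1 := hDf p (X1 p)
    have h2 := hDf p (X2 p)
    rw [hp] at h1 h2
    simp only [h1, h2, zero_mul, zero_add]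
    have : (Real.exp (h p) * fderiv ℝ δ p (X1 p)) ^ 2
        + (Real.exp (h p) * fderiv ℝ δ p (X2 p)) ^ 2
        = Real.exp (h p) ^ 2 * ((fderiv ℝ δ p (X1 p)) ^ 2 + (fderiv ℝ δ p (X2 p)) ^ 2) := by
      ring
    rw [this, heik p, mul_one, Real.sqrt_sq (Real.exp_nonneg _)]
  -- smoothness of the derivative-apply maps
  have hu : ContDiff ℝ (⊤ : ℕ∞) (fun q => fderiv ℝ h q (X0 q)) :=
    (hh.fderiv_right (by exact_mod_cast le_top)).clm_apply hX0
  have hv : ContDiff ℝ (⊤ : ℕ∞) (fun q => fderiv ℝ δ q (X0 q)) :=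
    (hδ.fderiv_right (by exact_mod_cast le_top)).clm_apply hX0
  have hud : Differentiable ℝ (fun q => fderiv ℝ h q (X0 q)) :=
    hu.differentiable (by simp)
  have hvd : Differentiable ℝ (fun q => fderiv ℝ δ q (X0 q)) :=
    hv.differentiable (by simp)
  -- rewrite the second-derivative function of f
  have hfun : (fun q => fderiv ℝ f q (X0 q))
      = fun q => Real.exp (h q) * (δ q * fderiv ℝ h q (X0 q) + fderiv ℝ δ q (X0 q)) := by
    funext q; exact hDf q (X0 q)
  -- derivative of the inner bracket at p
  have hinner : fderiv ℝ (fun q => δ q * fderiv ℝ h q (X0 q) + fderiv ℝ δ q (X0 q)) p (X0 p)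
      = fderiv ℝ δ p (X0 p) * fderiv ℝ h p (X0 p)
        + fderiv ℝ (fun q => fderiv ℝ δ q (X0 q)) p (X0 p) := by
    rw [fderiv_fun_add (show DifferentiableAt ℝ (fun q => δ q * fderiv ℝ h q (X0 q)) p from (hδd p).mul (hud p)) (hvd p)]
    rw [ContinuousLinearMap.add_apply]
    rw [fderiv_fun_mul (hδd p) (hud p)]
    simp [hp]
    ring
  have hbd : DifferentiableAt ℝ
      (fun q => δ q * fderiv ℝ h q (X0 q) + fderiv ℝ δ q (X0 q)) p :=
    ((hδd p).mul (hud p)).add (hvd p)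
  -- compute the second derivative of f at p
  have hsecond : fderiv ℝ (fun q => fderiv ℝ f q (X0 q)) p (X0 p)
      = Real.exp (h p) * (fderiv ℝ (fun q => fderiv ℝ δ q (X0 q)) p (X0 p)
          + 2 * fderiv ℝ h p (X0 p) * fderiv ℝ δ p (X0 p)) := by
    rw [hfun, fderiv_fun_mul (hed p) hbd]
    rw [ContinuousLinearMap.add_apply]
    simp only [ContinuousLinearMap.smul_apply, smul_eq_mul]
    rw [hinner, fderiv_exp (hhd p)]
    simp [hp]
    ring
  have hfp : fderiv ℝ f p (X0 p) = Real.exp (h p) * fderiv ℝ δ p (X0 p) := by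
    rw [hDf p (X0 p), hp]; ring
  rw [hsecond, hfp, hmp]
  have he : Real.exp (h p) ≠ 0 := Real.exp_ne_zero _
  field_simp
  ring
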